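/- Let x_1, …, x_n be elements of a group G and let y ∈ {x_1, …, x_n}. Then the left-normed commutator [x_1, …, x_n] is a product of 2^{n−1} elements, each of which is a conjugate in G of y or of y⁻¹. -/

import Mathlib

/-- The commutator `[a,b] = a⁻¹ * b⁻¹ * a * b`. -/
def pcomm {G : Type*} [Group G] (a b : G) : G := a⁻¹ * b⁻¹ * a * b

/-- Left-normed commutator `[x₁,…,xₙ]` of a list of group elements
(equal to `1` for the empty list). -/
def lnc {G : Type*} [Group G] : List G → G
  | [] => 1
  | a :: t => t.foldl pcomm a

section Aux

variable {G : Type*} [Group G]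

lemma lnc_concat (l : List G) (hne : l ≠ []) (b : G) : lnc (l ++ [b]) = pcomm (lnc l) b := by
  cases l with
  | nil => exact absurd rfl hne
  | cons a t => simp [lnc, List.foldl_append]

lemma prod_map_conj (x : G) (l : List G) :
    (l.map (fun a => x⁻¹ * a * x)).prod = x⁻¹ * l.prod * x := by
  induction l with
  | nil => simp
  | cons a t ih => simp only [List.map_cons, List.prod_cons, ih]; group

/-- `g` is a conjugate of `y` or of `y⁻¹`. -/
def IsConjPM (y g : G) : Prop := ∃ h : G, g = h⁻¹ * y * h ∨ g = h⁻¹ * y⁻¹ * h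

/-- `g` is a product of `m` conjugates of `y^{±1}`. -/
def ProdConj (y : G) (m : ℕ) (g : G) : Prop :=
  ∃ l : List G, l.length = m ∧ (∀ a ∈ l, IsConjPM y a) ∧ l.prod = g

lemma IsConjPM.inv {y g : G} (h : IsConjPM y g) : IsConjPM y g⁻¹ := by
  obtain ⟨h, hh | hh⟩ := h <;> exact ⟨h, by simp [hh, mul_assoc]⟩

lemma IsConjPM.conj {y g : G} (h : IsConjPM y g) (x : G) : IsConjPM y (x⁻¹ * g * x) := by
  obtain ⟨h, hh | hh⟩ := h
  · exact ⟨h * x, Or.inl (by simp [hh, mul_assoc])⟩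
  · exact ⟨h * x, Or.inr (by simp [hh, mul_assoc])⟩

lemma ProdConj.single {y g : G} (h : IsConjPM y g) : ProdConj y 1 g :=
  ⟨[g], rfl, by simpa using h, by simp⟩

lemma ProdConj.mul {y g g' : G} {m k : ℕ} (h : ProdConj y m g) (h' : ProdConj y k g') :
    ProdConj y (m + k) (g * g') := by
  obtain ⟨l, hl, hc, hp⟩ := h
  obtain ⟨l', hl', hc', hp'⟩ := h'
  refine ⟨l ++ l', by simp [hl, hl'], ?_, by simp [hp, hp']⟩
  intro a ha
  rcases List.mem_append.1 ha with ha | ha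
  · exact hc a ha
  · exact hc' a ha

lemma ProdConj.inv {y g : G} {m : ℕ} (h : ProdConj y m g) : ProdConj y m g⁻¹ := by
  obtain ⟨l, hl, hc, hp⟩ := h
  refine ⟨((l.map (·⁻¹)).reverse), by simp [hl], ?_, ?_⟩
  · intro a ha
    simp only [List.mem_reverse, List.mem_map] at ha
    obtain ⟨b, hb, rfl⟩ := ha
    exact (hc b hb).inv
  · rw [← hp, ← List.prod_inv_reverse]

lemma ProdConj.conj {y g : G} {m : ℕ} (h : ProdConj y m g) (x : G) :
    ProdConj y m (x⁻¹ * g * x) := by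
  obtain ⟨l, hl, hc, hp⟩ := h
  refine ⟨l.map (fun a => x⁻¹ * a * x), by simp [hl], ?_, ?_⟩
  · intro a ha
    simp only [List.mem_map] at ha
    obtain ⟨b, hb, rfl⟩ := ha
    exact (hc b hb).conj x
  · rw [prod_map_conj, hp]

lemma ProdConj.one_even (y : G) (k : ℕ) : ProdConj y (2 * k) (1 : G) := by
  induction k with
  | zero => exact ⟨[], rfl, by simp, by simp⟩
  | succ k ih =>
    have h2 : ProdConj y 2 (1 : G) := by
      refine ⟨[y, y⁻¹], rfl, ?_, by simp⟩
      intro a ha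
      simp only [List.mem_cons, List.mem_singleton, List.not_mem_nil, or_false] at ha
      rcases ha with rfl | rfl
      · exact ⟨1, Or.inl (by simp)⟩
      · exact ⟨1, Or.inr (by simp)⟩
    have := ih.mul h2
    simpa [Nat.mul_succ] using this

lemma key : ∀ (n : ℕ) (x : Fin (n + 1) → G) (y : G), y ∈ Set.range x →
    ProdConj y (2 ^ n) (lnc (List.ofFn x)) := by
  intro n
  induction n with
  | zero =>
    intro x y hy
    obtain ⟨i, rfl⟩ := hy
    have : i = 0 := Fin.ext (Nat.lt_one_iff.mp i.isLt)
    subst this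
    refine ProdConj.single ⟨1, Or.inl ?_⟩
    simp [lnc]
  | succ n ih =>
    intro x y hy
    set b := x (Fin.last (n + 1)) with hb
    have hsplit : List.ofFn x = List.ofFn (fun i : Fin (n + 1) => x i.castSucc) ++ [b] := by
      rw [List.ofFn_succ']; simp [List.concat_eq_append, hb]
    set L := lnc (List.ofFn (fun i : Fin (n + 1) => x i.castSucc)) with hL
    have hlnc : lnc (List.ofFn x) = L⁻¹ * b⁻¹ * L * b := by
      rw [hsplit, lnc_concat _ (by simp) b]; rfl
    obtain ⟨i, rfl⟩ := hy
    by_cases hi : i = Fin.last (n + 1)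
    · subst hi
      have h1 : ProdConj (x (Fin.last (n+1))) 1 (L⁻¹ * b⁻¹ * L) :=
        ProdConj.single ⟨L, Or.inr (by rw [hb])⟩
      have h2 : ProdConj (x (Fin.last (n+1))) 1 b := ProdConj.single ⟨1, Or.inl (by simp [hb])⟩
      have h3 := (h1.mul h2).mul (ProdConj.one_even (x (Fin.last (n+1))) (2 ^ n - 1))
      rw [hlnc]
      have harith : 1 + 1 + 2 * (2 ^ n - 1) = 2 ^ (n + 1) := by
        have : 1 ≤ 2 ^ n := Nat.one_le_two_pow
        rw [pow_succ]; omega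
      rw [← harith]
      simpa [mul_assoc] using h3
    · have hlt : (i : ℕ) < n + 1 := by
        rcases lt_or_eq_of_le (Nat.lt_succ_iff.mp i.isLt) with h | h
        · exact h
        · exact absurd (Fin.ext h) hi
      have hmem : x i ∈ Set.range (fun j : Fin (n + 1) => x j.castSucc) :=
        ⟨⟨i, hlt⟩, congrArg x (Fin.ext rfl)⟩
      have hIH : ProdConj (x i) (2 ^ n) L := ih _ _ hmem
      have h1 : ProdConj (x i) (2 ^ n) L⁻¹ := hIH.inv
      have h2 : ProdConj (x i) (2 ^ n) (b⁻¹ * L * b) := hIH.conj b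
      have h3 := h1.mul h2
      rw [hlnc]
      have harith : 2 ^ n + 2 ^ n = 2 ^ (n + 1) := by rw [pow_succ]; omega
      rw [← harith]
      have : L⁻¹ * b⁻¹ * L * b = L⁻¹ * (b⁻¹ * L * b) := by group
      rw [this]
      exact h3

lemma ofFn_get_cast {α : Type*} (l : List α) (m : ℕ) (h : l.length = m) :
    List.ofFn (fun i : Fin m => l.get (Fin.cast h.symm i)) = l := by
  subst h
  simp [List.ofFn_get]

end Aux

theorem stmt11 {G : Type*} [Group G] (n : ℕ) (hn : 1 ≤ n) (x : Fin n → G)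
    (y : G) (hy : y ∈ Set.range x) :
    ∃ c : Fin (2 ^ (n - 1)) → G,
      (∀ i, ∃ h : G, c i = h⁻¹ * y * h ∨ c i = h⁻¹ * y⁻¹ * h) ∧
      lnc (List.ofFn x) = (List.ofFn c).prod := by
  obtain ⟨m, rfl⟩ := Nat.exists_eq_succ_of_ne_zero (by omega : n ≠ 0)
  obtain ⟨l, hl, hc, hp⟩ := key m x y hy
  simp only [Nat.succ_sub_one]
  refine ⟨fun i => l.get (Fin.cast hl.symm i), ?_, ?_⟩
  · intro i
    obtain ⟨h, hh⟩ := hc _ (l.get_mem _)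
    exact ⟨h, hh⟩
  · rw [ofFn_get_cast l (2 ^ m) hl]; exact hp.symm
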